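/- For every λ ∈ X and every simple root α: s_α λ ≤_e λ in the excellent order if and only if s_α λ ≥_d λ in the dominance order (equivalently, if and only if (λ, α∨) ≤ 0). -/

import Mathlib

open scoped InnerProductSpace Classical

noncomputable section

/-- A reduced crystallographic root system `Φ` spanning a finite-dimensional real inner
product space `V`, together with a choice of simple roots `π` (determining the positive
system), the corresponding fundamental weights `ω`, the reflections `s`, the Weyl group
`W` and the weight lattice `X`. -/
structure RootSystemData (V : Type) [NormedAddCommGroup V] [InnerProductSpace ℝ V]
    [FiniteDimensional ℝ V] where
  /-- the (finite) set of roots -/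
  Φ : Finset V
  /-- the rank -/
  r : ℕ
  /-- the simple roots `α₁, …, α_r` -/
  π : Fin r → V
  /-- the fundamental weights `ω₁, …, ω_r` -/
  ω : Fin r → V
  /-- the orthogonal reflection attached to a root -/
  s : V → (V ≃ₗ[ℝ] V)
  /-- the Weyl group -/
  W : Subgroup (V ≃ₗ[ℝ] V)
  /-- the weight lattice -/
  X : AddSubgroup V
  root_ne_zero : ∀ α ∈ Φ, α ≠ (0 : V)
  root_span : Submodule.span ℝ (Φ : Set V) = ⊤
  reduced : ∀ α ∈ Φ, ∀ c : ℝ, c • α ∈ Φ → c = 1 ∨ c = -1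
  crystallographic : ∀ α ∈ Φ, ∀ β ∈ Φ, ∃ n : ℤ, 2 * ⟪β, α⟫_ℝ / ⟪α, α⟫_ℝ = (n : ℝ)
  s_apply : ∀ α ∈ Φ, ∀ v : V, s α v = v - (2 * ⟪v, α⟫_ℝ / ⟪α, α⟫_ℝ) • α
  refl_stable : ∀ α ∈ Φ, ∀ β ∈ Φ, s α β ∈ Φ
  W_eq : W = Subgroup.closure {g : V ≃ₗ[ℝ] V | ∃ α ∈ Φ, g = s α}
  inner_invariant : ∀ g ∈ W, ∀ u v : V, ⟪g u, g v⟫_ℝ = ⟪u, v⟫_ℝ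
  simple_mem : ∀ i, π i ∈ Φ
  simple_indep : LinearIndependent ℝ π
  pos_or_neg : ∀ α ∈ Φ,
      (∃ c : Fin r → ℝ, (∀ i, 0 ≤ c i) ∧ α = ∑ i, c i • π i) ∨
      (∃ c : Fin r → ℝ, (∀ i, 0 ≤ c i) ∧ -α = ∑ i, c i • π i)
  fund : ∀ i j, 2 * ⟪ω i, π j⟫_ℝ / ⟪π j, π j⟫_ℝ = if i = j then (1 : ℝ) else 0
  X_eq : X = AddSubgroup.closure (Set.range ω)
  X_stable : ∀ g ∈ W, ∀ x ∈ X, g x ∈ X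

/-- The pairing `(v, α∨) = 2(v,α)/(α,α)` of a vector with the coroot of `α`. -/
def pairing {V : Type} [NormedAddCommGroup V] [InnerProductSpace ℝ V]
    (v α : V) : ℝ := 2 * ⟪v, α⟫_ℝ / ⟪α, α⟫_ℝ

namespace RootSystemData

variable {V : Type} [NormedAddCommGroup V] [InnerProductSpace ℝ V] [FiniteDimensional ℝ V]
variable (C : RootSystemData V)

/-- `α` is a nonnegative combination of the simple roots (a positive root, if `α ∈ Φ`). -/
def IsPos (α : V) : Prop := ∃ c : Fin C.r → ℝ, (∀ i, 0 ≤ c i) ∧ α = ∑ i, c i • C.π i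

/-- `α` is a nonpositive combination of the simple roots (a negative root, if `α ∈ Φ`). -/
def IsNeg (α : V) : Prop := C.IsPos (-α)

/-- A weight is dominant if it pairs nonnegatively with all simple coroots. -/
def IsDominant (lam : V) : Prop := ∀ i, 0 ≤ pairing lam (C.π i)

/-- The product of the simple reflections along a word. -/
def wordProd (l : List (Fin C.r)) : V ≃ₗ[ℝ] V := (l.map fun i => C.s (C.π i)).prod

/-- The length of `w`: the least length of an expression of `w` as a product of
simple reflections. -/
def length (w : V ≃ₗ[ℝ] V) : ℕ :=
  sInf {n | ∃ l : List (Fin C.r), l.length = n ∧ C.wordProd l = w}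

/-- The (strong) Bruhat order on the Weyl group: `u ≤ v` iff `v` is obtained from `u`
by successively multiplying by reflections, increasing the length at each step. -/
def BruhatLE (u v : V ≃ₗ[ℝ] V) : Prop :=
  Relation.ReflTransGen
    (fun a b => (∃ α ∈ C.Φ, b = a * C.s α) ∧ C.length a < C.length b) u v

/-- The Steinberg weight `e_v = v⁻¹ ⬝ ∑_{i : v⁻¹ α_i < 0} ω_i`. -/
def steinberg (v : V ≃ₗ[ℝ] V) : V :=
  v⁻¹ (∑ i ∈ Finset.univ.filter (fun i => C.IsNeg (v⁻¹ (C.π i))), C.ω i)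

/-- The excellent order on weights: `λ ≤ₑ μ` iff `(λ,λ) < (μ,μ)`, or `λ = wν`, `μ = zν`
for some dominant `ν ∈ X` and `w ≤ z` in the Bruhat order. -/
def ExcLE (lam mu : V) : Prop :=
  ⟪lam, lam⟫_ℝ < ⟪mu, mu⟫_ℝ ∨
    ∃ nu ∈ C.X, C.IsDominant nu ∧
      ∃ w ∈ C.W, ∃ z ∈ C.W, C.BruhatLE w z ∧ lam = w nu ∧ mu = z nu

/-- The strict excellent order. -/
def ExcLT (lam mu : V) : Prop := C.ExcLE lam mu ∧ lam ≠ mu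

/-- The antipodal excellent order: `λ ≤ₐ μ` iff `-λ ≤ₑ -μ`. -/
def AntiLE (lam mu : V) : Prop := C.ExcLE (-lam) (-mu)

/-- The strict antipodal excellent order. -/
def AntiLT (lam mu : V) : Prop := C.AntiLE lam mu ∧ lam ≠ mu

/-- The dominance order: `μ ≤_d ν` iff `ν - μ` is a nonnegative integer combination of
the positive roots. -/
def DomLE (mu nu : V) : Prop :=
  ∃ c : V → ℕ, nu - mu = ∑ α ∈ C.Φ.filter (fun a => C.IsPos a), (c α : ℝ) • α

theorem omega_mem (i : Fin C.r) : C.ω i ∈ C.X := by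
  rw [C.X_eq]; exact AddSubgroup.subset_closure ⟨i, rfl⟩

theorem steinberg_mem {v : V ≃ₗ[ℝ] V} (hv : v ∈ C.W) : C.steinberg v ∈ C.X :=
  C.X_stable _ (inv_mem hv) _ (AddSubgroup.sum_mem _ fun i _ => C.omega_mem i)

/-- The group ring `ℤ[X]` of the weight lattice. -/
abbrev GroupRing := AddMonoidAlgebra ℤ ↥C.X

/-- The basis element `e^λ` of `ℤ[X]`. -/
def expo (x : V) (hx : x ∈ C.X) : C.GroupRing := AddMonoidAlgebra.single ⟨x, hx⟩ 1

/-- `e^λ`, defined for all `λ : V` (and zero off the lattice). -/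
def expoOf (x : V) : C.GroupRing := if hx : x ∈ C.X then C.expo x hx else 0

/-- The coefficient of `e^x` in an element of `ℤ[X]`. -/
def coeff (m : C.GroupRing) (x : ↥C.X) : ℤ := (AddMonoidAlgebra.coeff m : ↥C.X →₀ ℤ) x

/-- The support of an element of `ℤ[X]`. -/
def supp (m : C.GroupRing) : Finset ↥C.X := (AddMonoidAlgebra.coeff m : ↥C.X →₀ ℤ).support

/-- The action of `g ∈ W` on the weight lattice. -/
def actX (g : V ≃ₗ[ℝ] V) (hg : g ∈ C.W) : ↥C.X → ↥C.X :=
  fun x => ⟨g x, C.X_stable g hg x.1 x.2⟩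

/-- The action of `g ∈ W` on `ℤ[X]`, with `e^λ ↦ e^{gλ}`. -/
def wAct (g : V ≃ₗ[ℝ] V) (hg : g ∈ C.W) (m : C.GroupRing) : C.GroupRing :=
  AddMonoidAlgebra.ofCoeff (Finsupp.mapDomain (C.actX g hg) (AddMonoidAlgebra.coeff m))

/-- `m` lies in the invariant subring `ℤ[X]^W`. -/
def IsWInvariant (m : C.GroupRing) : Prop := ∀ g (hg : g ∈ C.W), C.wAct g hg m = m

/-- The parabolic subgroup `W_{Π'}` generated by the simple reflections `s_α, α ∈ Π'`,
for a subset `Π'` of the simple roots (given by a subset `J` of the index set). -/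
def parabolicSubgroup (J : Set (Fin C.r)) : Subgroup (V ≃ₗ[ℝ] V) :=
  Subgroup.closure {g | ∃ i ∈ J, g = C.s (C.π i)}

theorem parabolic_le (J : Set (Fin C.r)) : C.parabolicSubgroup J ≤ C.W := by
  refine (Subgroup.closure_le _).2 ?_
  rintro g ⟨i, _, rfl⟩
  rw [C.W_eq]
  exact Subgroup.subset_closure ⟨C.π i, C.simple_mem i, rfl⟩

/-- `m` lies in the invariant subring `ℤ[X]^H` for a subgroup `H ≤ W`. -/
def IsInvariantUnder (H : Subgroup (V ≃ₗ[ℝ] V)) (hH : H ≤ C.W) (m : C.GroupRing) : Prop :=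
  ∀ g (hg : g ∈ H), C.wAct g (hH hg) m = m

/-- `v` is of minimal length in its coset `v ⬝ W_{Π'}`. -/
def IsMinCosetRep (J : Set (Fin C.r)) (v : V ≃ₗ[ℝ] V) : Prop :=
  v ∈ C.W ∧ ∀ z ∈ C.parabolicSubgroup J, C.length v ≤ C.length (v * z)

/-- The subgroup generated by the simple reflections fixing a given vector. -/
def fixSubgroup (x : V) : Subgroup (V ≃ₗ[ℝ] V) :=
  Subgroup.closure {g | ∃ i : Fin C.r, C.s (C.π i) x = x ∧ g = C.s (C.π i)}

end RootSystemData

namespace RootSystemData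

variable {V : Type} [NormedAddCommGroup V] [InnerProductSpace ℝ V] [FiniteDimensional ℝ V]
variable {C : RootSystemData V}

-- ====================== basic facts ======================

lemma root_inner_pos {α : V} (hα : α ∈ C.Φ) : 0 < ⟪α, α⟫_ℝ :=
  lt_of_le_of_ne real_inner_self_nonneg
    (fun e => C.root_ne_zero α hα ((@inner_self_eq_zero ℝ _ _ _ _ α).1 e.symm))

lemma s_apply'' {α : V} (hα : α ∈ C.Φ) (v : V) :
    C.s α v = v - pairing v α • α := C.s_apply α hα v

lemma pairing_self {α : V} (hα : α ∈ C.Φ) : pairing α α = 2 := by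
  have := root_inner_pos hα
  rw [pairing, mul_div_assoc, div_self this.ne', mul_one]

lemma pairing_sub (u v α : V) : pairing (u - v) α = pairing u α - pairing v α := by
  simp [pairing, inner_sub_left]; ring

lemma pairing_smul (c : ℝ) (u α : V) : pairing (c • u) α = c * pairing u α := by
  simp [pairing, real_inner_smul_left]; ring

lemma s_s {α : V} (hα : α ∈ C.Φ) (v : V) : C.s α (C.s α v) = v := by
  rw [s_apply'' hα, s_apply'' hα, pairing_sub, pairing_smul, pairing_self hα]
  module

lemma s_mul_self {α : V} (hα : α ∈ C.Φ) : C.s α * C.s α = 1 := by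
  refine LinearEquiv.ext fun v => ?_
  exact s_s hα v

lemma s_inv {α : V} (hα : α ∈ C.Φ) : (C.s α)⁻¹ = C.s α :=
  inv_eq_of_mul_eq_one_left (s_mul_self hα)

lemma s_mem_W {α : V} (hα : α ∈ C.Φ) : C.s α ∈ C.W := by
  rw [C.W_eq]; exact Subgroup.subset_closure ⟨α, hα, rfl⟩

lemma s_apply_self {α : V} (hα : α ∈ C.Φ) : C.s α α = -α := by
  rw [s_apply'' hα, pairing_self hα]; module

lemma neg_root_mem {α : V} (hα : α ∈ C.Φ) : -α ∈ C.Φ := by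
  have := C.refl_stable α hα α hα
  rwa [s_apply_self hα] at this

lemma s_neg {α : V} (hα : α ∈ C.Φ) : C.s (-α) = C.s α := by
  refine LinearEquiv.ext fun v => ?_
  rw [s_apply'' (neg_root_mem hα), s_apply'' hα]
  simp [pairing, inner_neg_left, inner_neg_right, real_inner_comm]
  rw [neg_div]
  module

lemma W_maps {g : V ≃ₗ[ℝ] V} (hg : g ∈ C.W) {α : V} (hα : α ∈ C.Φ) : g α ∈ C.Φ := by
  rw [C.W_eq] at hg
  revert α
  refine Subgroup.closure_induction (p := fun g _ => ∀ {α : V}, α ∈ C.Φ → g α ∈ C.Φ)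
    ?_ ?_ ?_ ?_ hg
  · rintro x ⟨β, hβ, rfl⟩ α hα
    exact C.refl_stable β hβ α hα
  · intro α hα; simpa using hα
  · intro x y _ _ hx hy α hα
    exact hx (hy hα)
  · rintro x hx h α hα
    classical
    have himg : C.Φ.image (fun v => x v) = C.Φ := by
      apply Finset.eq_of_subset_of_card_le
      · intro a ha
        obtain ⟨b, hb, rfl⟩ := Finset.mem_image.1 ha
        exact h hb
      · rw [Finset.card_image_of_injective _ x.injective]
    obtain ⟨β, hβ, hβα⟩ := Finset.mem_image.1 (himg ▸ hα)
    have hx : x⁻¹ (x β) = β := x.symm_apply_apply β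
    rw [show (α : V) = x β from hβα.symm, hx]; exact hβ


-- ====================== invariance and conjugation ======================

lemma inv_apply_apply (g : V ≃ₗ[ℝ] V) (v : V) : g⁻¹ (g v) = v := g.symm_apply_apply v

lemma apply_inv_apply (g : V ≃ₗ[ℝ] V) (v : V) : g (g⁻¹ v) = v := g.apply_symm_apply v

lemma inner_inv {g : V ≃ₗ[ℝ] V} (hg : g ∈ C.W) (u v : V) : ⟪g u, v⟫_ℝ = ⟪u, g⁻¹ v⟫_ℝ := by
  have h1 : ⟪g⁻¹ (g u), g⁻¹ v⟫_ℝ = ⟪g u, v⟫_ℝ := C.inner_invariant g⁻¹ (inv_mem hg) (g u) v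
  rw [← h1, inv_apply_apply]

lemma inner_self_inv {g : V ≃ₗ[ℝ] V} (hg : g ∈ C.W) (v : V) : ⟪g v, g v⟫_ℝ = ⟪v, v⟫_ℝ :=
  C.inner_invariant g hg v v

lemma pairing_inv {g : V ≃ₗ[ℝ] V} (hg : g ∈ C.W) (u v : V) :
    pairing (g u) v = pairing u (g⁻¹ v) := by
  unfold pairing
  rw [inner_inv hg u v]
  congr 1
  rw [← C.inner_invariant g⁻¹ (inv_mem hg) v v]

lemma pairing_w {g : V ≃ₗ[ℝ] V} (hg : g ∈ C.W) (u v : V) :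
    pairing (g u) (g v) = pairing u v := by
  rw [pairing_inv hg, inv_apply_apply]

lemma conj_s {g : V ≃ₗ[ℝ] V} (hg : g ∈ C.W) {β : V} (hβ : β ∈ C.Φ) :
    g * C.s β * g⁻¹ = C.s (g β) := by
  refine LinearEquiv.ext fun v => ?_
  have hgβ : g β ∈ C.Φ := W_maps hg hβ
  show g (C.s β (g⁻¹ v)) = C.s (g β) v
  rw [s_apply'' hβ, s_apply'' hgβ, map_sub, map_smul, apply_inv_apply]
  congr 2
  have h2 := pairing_inv hg (g⁻¹ v) (g β)
  rw [apply_inv_apply] at h2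
  rw [h2, inv_apply_apply]

lemma mul_s_eq {g : V ≃ₗ[ℝ] V} (hg : g ∈ C.W) {β : V} (hβ : β ∈ C.Φ) :
    g * C.s β = C.s (g β) * g := by
  rw [← conj_s hg hβ]
  group

-- ====================== positivity combinatorics ======================

lemma coeff_eq {c d : Fin C.r → ℝ} (h : ∑ i, c i • C.π i = ∑ i, d i • C.π i) : c = d := by
  funext j
  have h0 : ∑ i, (c i - d i) • C.π i = 0 := by
    simp only [sub_smul, Finset.sum_sub_distrib, h, sub_self]
  have := Fintype.linearIndependent_iff.1 C.simple_indep _ h0 j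
  linarith

lemma not_pos_and_neg {α : V} (hα : α ∈ C.Φ) : ¬ (C.IsPos α ∧ C.IsNeg α) := by
  rintro ⟨⟨c, hc, hcs⟩, ⟨d, hd, hds⟩⟩
  have h0 : ∑ i, (c i + d i) • C.π i = ∑ i, (0 : ℝ) • C.π i := by
    simp only [add_smul, Finset.sum_add_distrib, ← hcs, ← hds]
    simp
  have := coeff_eq h0
  have hzero : ∀ i, c i = 0 := fun i => by
    have h1 : c i + d i = 0 := congrFun this i
    linarith [hc i, hd i]
  apply C.root_ne_zero α hα
  rw [hcs]
  simp [hzero]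

lemma pos_neg_dichotomy {α : V} (hα : α ∈ C.Φ) :
    (C.IsPos α ∧ ¬ C.IsNeg α) ∨ (C.IsNeg α ∧ ¬ C.IsPos α) := by
  rcases C.pos_or_neg α hα with h | h
  · exact Or.inl ⟨h, fun hn => not_pos_and_neg hα ⟨h, hn⟩⟩
  · exact Or.inr ⟨h, fun hp => not_pos_and_neg hα ⟨hp, h⟩⟩

lemma isPos_or_isNeg {α : V} (hα : α ∈ C.Φ) : C.IsPos α ∨ C.IsNeg α := C.pos_or_neg α hα

lemma isPos_pi (i : Fin C.r) : C.IsPos (C.π i) := by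
  refine ⟨fun j => if j = i then 1 else 0, fun j => by positivity, ?_⟩
  simp [ite_smul]

lemma pi_mem_filter (i : Fin C.r) : C.π i ∈ C.Φ.filter (fun a => C.IsPos a) :=
  Finset.mem_filter.2 ⟨C.simple_mem i, isPos_pi i⟩

lemma isNeg_neg_iff (α : V) : C.IsNeg (-α) ↔ C.IsPos α := by
  unfold IsNeg
  rw [neg_neg]

/-- chosen coefficients of a positive root -/
def ECoef (α : V) : Fin C.r → ℝ := if h : C.IsPos α then h.choose else 0

lemma ECoef_nonneg {α : V} (h : C.IsPos α) (i : Fin C.r) : 0 ≤ C.ECoef α i := by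
  rw [ECoef, dif_pos h]; exact h.choose_spec.1 i

lemma ECoef_eq {α : V} (h : C.IsPos α) : α = ∑ i, C.ECoef α i • C.π i := by
  rw [ECoef, dif_pos h]; exact h.choose_spec.2

lemma cone_coeff {x : V} {c : V → ℝ} (hc : ∀ v, 0 ≤ c v)
    (hx : x = ∑ α ∈ C.Φ.filter (fun a => C.IsPos a), c α • α) :
    ∃ d : Fin C.r → ℝ, (∀ j, 0 ≤ d j) ∧ x = ∑ j, d j • C.π j := by
  refine ⟨fun j => ∑ α ∈ C.Φ.filter (fun a => C.IsPos a), c α * C.ECoef α j, ?_, ?_⟩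
  · intro j
    apply Finset.sum_nonneg
    intro α hα
    exact mul_nonneg (hc α) (C.ECoef_nonneg (Finset.mem_filter.1 hα).2 j)
  · rw [hx]
    have step1 : ∀ α ∈ C.Φ.filter (fun a => C.IsPos a),
        c α • α = ∑ j, (c α * C.ECoef α j) • C.π j := by
      intro α hα
      have hE := C.ECoef_eq (Finset.mem_filter.1 hα).2
      calc c α • α = c α • ∑ j, C.ECoef α j • C.π j := by rw [← hE]
        _ = ∑ j, (c α * C.ECoef α j) • C.π j := by
            rw [Finset.smul_sum]
            exact Finset.sum_congr rfl fun j _ => smul_smul _ _ _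
    rw [Finset.sum_congr rfl step1, Finset.sum_comm]
    exact Finset.sum_congr rfl fun j _ => (Finset.sum_smul).symm

lemma smul_pi_cone_nonneg {t : ℝ} {i : Fin C.r} {c : V → ℝ} (hc : ∀ v, 0 ≤ c v)
    (hx : t • C.π i = ∑ α ∈ C.Φ.filter (fun a => C.IsPos a), c α • α) : 0 ≤ t := by
  obtain ⟨d, hd, hds⟩ := cone_coeff hc hx
  have : ∑ j, (fun j => if j = i then t else 0) j • C.π j = ∑ j, d j • C.π j := by
    rw [← hds]
    simp [ite_smul]
  have := coeff_eq this
  have := congrFun this i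
  simp at this
  rw [this]
  exact hd i
-- ====================== simple reflections on positive roots ======================

lemma simple_mult {α : V} (hα : α ∈ C.Φ) {i : Fin C.r} {t : ℝ} (h : α = t • C.π i) :
    t = 1 ∨ t = -1 := by
  apply C.reduced (C.π i) (C.simple_mem i) t
  rw [← h]; exact hα

lemma exists_other_coeff {α : V} (hα : α ∈ C.Φ) {i : Fin C.r}
    (hne : α ≠ C.π i) {c : Fin C.r → ℝ} (hc : ∀ j, 0 ≤ c j)
    (hcs : α = ∑ j, c j • C.π j) : ∃ j, j ≠ i ∧ 0 < c j := by
  by_contra hcon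
  push_neg at hcon
  have hz : ∀ j, j ≠ i → c j = 0 := fun j hj => le_antisymm (hcon j hj) (hc j)
  have hsum : α = c i • C.π i := by
    rw [hcs, Finset.sum_eq_single i]
    · intro j _ hj; rw [hz j hj, zero_smul]
    · intro h; exact absurd (Finset.mem_univ i) h
  rcases simple_mult hα hsum with h1 | h1
  · apply hne; rw [hsum, h1, one_smul]
  · have := hc i; rw [h1] at this; linarith

lemma simple_reflect_pos {α : V} (hα : α ∈ C.Φ) (hp : C.IsPos α) {i : Fin C.r}
    (hne : α ≠ C.π i) : C.IsPos (C.s (C.π i) α) := by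
  have hsα : C.s (C.π i) α ∈ C.Φ := C.refl_stable _ (C.simple_mem i) _ hα
  rcases isPos_or_isNeg hsα with h | h
  · exact h
  · exfalso
    obtain ⟨c, hc, hcs⟩ := hp
    obtain ⟨j, hji, hcj⟩ := exists_other_coeff hα hne hc hcs
    obtain ⟨d, hd, hds⟩ := h
    -- s_i α = α - k π_i, and -(s_i α) = Σ d_j π_j
    set k := pairing α (C.π i) with hk
    have hsae : C.s (C.π i) α = α - k • C.π i := s_apply'' (C.simple_mem i) α
    have hzero : ∑ m, (c m + d m - (if m = i then k else 0)) • C.π m = ∑ m, (0:ℝ) • C.π m := by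
      simp only [sub_smul, add_smul, Finset.sum_sub_distrib, Finset.sum_add_distrib, ← hcs, ← hds]
      have : ∑ m, (if m = i then k else 0) • C.π m = k • C.π i := by simp [ite_smul]
      rw [this, hsae]
      simp
    have hcoef := congrFun (coeff_eq hzero) j
    simp only [if_neg hji] at hcoef
    have := hd j
    linarith

lemma reflect_neg_eq_simple {α : V} (hα : α ∈ C.Φ) (hp : C.IsPos α) {i : Fin C.r}
    (hn : C.IsNeg (C.s (C.π i) α)) : α = C.π i := by
  by_contra hne
  have hpos := simple_reflect_pos hα hp hne
  exact not_pos_and_neg (C.refl_stable _ (C.simple_mem i) _ hα) ⟨hpos, hn⟩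

-- ====================== words ======================

lemma wordProd_nil : C.wordProd [] = 1 := rfl

lemma wordProd_cons (j : Fin C.r) (l : List (Fin C.r)) :
    C.wordProd (j :: l) = C.s (C.π j) * C.wordProd l := by
  simp [wordProd]

lemma wordProd_append (l₁ l₂ : List (Fin C.r)) :
    C.wordProd (l₁ ++ l₂) = C.wordProd l₁ * C.wordProd l₂ := by
  simp [wordProd]

lemma wordProd_singleton (j : Fin C.r) : C.wordProd [j] = C.s (C.π j) := by
  simp [wordProd]

lemma wordProd_mem (l : List (Fin C.r)) : C.wordProd l ∈ C.W := by
  induction l with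
  | nil => exact C.W.one_mem
  | cons j l ih =>
    rw [wordProd_cons]
    exact C.W.mul_mem (s_mem_W (C.simple_mem j)) ih

lemma wordProd_reverse (l : List (Fin C.r)) :
    C.wordProd l.reverse = (C.wordProd l)⁻¹ := by
  induction l with
  | nil => simp [wordProd]
  | cons j l ih =>
    rw [wordProd_cons, List.reverse_cons, wordProd_append, ih, wordProd_singleton,
      mul_inv_rev, s_inv (C.simple_mem j)]

-- ====================== rho and heights ======================

/-- the sum of the fundamental weights -/
def rho : V := ∑ j, C.ω j

lemma inner_omega_pi (j i : Fin C.r) :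
    ⟪C.ω j, C.π i⟫_ℝ = (if j = i then 1 else 0) * (⟪C.π i, C.π i⟫_ℝ / 2) := by
  have h := C.fund j i
  have hpos := root_inner_pos (C.simple_mem i)
  field_simp at h ⊢
  linarith [h]

lemma inner_pi_rho (i : Fin C.r) : ⟪C.π i, C.rho⟫_ℝ = ⟪C.π i, C.π i⟫_ℝ / 2 := by
  rw [rho, inner_sum]
  have : ∀ j, ⟪C.π i, C.ω j⟫_ℝ = if j = i then ⟪C.π i, C.π i⟫_ℝ / 2 else 0 := by
    intro j
    rw [real_inner_comm, inner_omega_pi]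
    split <;> simp
  rw [Finset.sum_congr rfl fun j _ => this j]
  simp

lemma inner_pi_rho_pos (i : Fin C.r) : 0 < ⟪C.π i, C.rho⟫_ℝ := by
  rw [inner_pi_rho]
  linarith [root_inner_pos (C.simple_mem i)]

lemma pos_inner_rho_pos {α : V} (hα : α ∈ C.Φ) (hp : C.IsPos α) : 0 < ⟪α, C.rho⟫_ℝ := by
  obtain ⟨c, hc, hcs⟩ := hp
  have hne : ∃ j, 0 < c j := by
    by_contra hcon
    push_neg at hcon
    have : ∀ j, c j = 0 := fun j => le_antisymm (hcon j) (hc j)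
    apply C.root_ne_zero α hα
    rw [hcs]; simp [this]
  obtain ⟨j, hj⟩ := hne
  rw [hcs, sum_inner]
  have hterm : ∀ m, (0:ℝ) ≤ ⟪c m • C.π m, C.rho⟫_ℝ := by
    intro m
    rw [real_inner_smul_left]
    exact mul_nonneg (hc m) (le_of_lt (inner_pi_rho_pos m))
  have hj' : (0:ℝ) < ⟪c j • C.π j, C.rho⟫_ℝ := by
    rw [real_inner_smul_left]
    exact mul_pos hj (inner_pi_rho_pos j)
  exact Finset.sum_pos' (fun m _ => hterm m) ⟨j, Finset.mem_univ j, hj'⟩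

lemma exists_pos_inner_simple {α : V} (hα : α ∈ C.Φ) (hp : C.IsPos α) :
    ∃ i, 0 < ⟪α, C.π i⟫_ℝ := by
  by_contra hcon
  push_neg at hcon
  obtain ⟨c, hc, hcs⟩ := hp
  have h0 : ⟪α, α⟫_ℝ ≤ 0 := by
    have h1 : ⟪α, α⟫_ℝ = ∑ m, c m * ⟪C.π m, α⟫_ℝ := by
      nth_rewrite 1 [hcs]
      rw [sum_inner]
      exact Finset.sum_congr rfl fun m _ => real_inner_smul_left _ _ _
    rw [h1]
    apply Finset.sum_nonpos
    intro m _
    exact mul_nonpos_of_nonneg_of_nonpos (hc m) (by rw [real_inner_comm]; exact hcon m)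
  linarith [root_inner_pos hα]

-- ====================== every reflection is a word in simple reflections ======================

lemma s_root_word_aux : ∀ n : ℕ, ∀ α, α ∈ C.Φ → C.IsPos α →
    (C.Φ.filter (fun β => C.IsPos β ∧ ⟪β, C.rho⟫_ℝ < ⟪α, C.rho⟫_ℝ)).card ≤ n →
    ∃ l, C.wordProd l = C.s α := by
  intro n
  induction n with
  | zero =>
    intro α hα hp hcard
    by_cases hs : ∃ i, α = C.π i
    · obtain ⟨i, rfl⟩ := hs
      exact ⟨[i], wordProd_singleton i⟩
    · exfalso
      push_neg at hs
      obtain ⟨i, hi⟩ := exists_pos_inner_simple hα hp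
      have hne := hs i
      have hβΦ : C.s (C.π i) α ∈ C.Φ := C.refl_stable _ (C.simple_mem i) _ hα
      have hβpos := simple_reflect_pos hα hp hne
      have hlt : ⟪C.s (C.π i) α, C.rho⟫_ℝ < ⟪α, C.rho⟫_ℝ := by
        rw [s_apply'' (C.simple_mem i), inner_sub_left, real_inner_smul_left]
        have : 0 < pairing α (C.π i) :=
          div_pos (by linarith) (root_inner_pos (C.simple_mem i))
        nlinarith [inner_pi_rho_pos i]
      have : C.s (C.π i) α ∈ C.Φ.filter (fun β => C.IsPos β ∧ ⟪β, C.rho⟫_ℝ < ⟪α, C.rho⟫_ℝ) :=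
        Finset.mem_filter.2 ⟨hβΦ, hβpos, hlt⟩
      have := Finset.card_pos.2 ⟨_, this⟩
      omega
  | succ n ih =>
    intro α hα hp hcard
    by_cases hs : ∃ i, α = C.π i
    · obtain ⟨i, rfl⟩ := hs
      exact ⟨[i], wordProd_singleton i⟩
    · push_neg at hs
      obtain ⟨i, hi⟩ := exists_pos_inner_simple hα hp
      have hne := hs i
      set β := C.s (C.π i) α with hβ
      have hβΦ : β ∈ C.Φ := C.refl_stable _ (C.simple_mem i) _ hα
      have hβpos := simple_reflect_pos hα hp hne
      have hlt : ⟪β, C.rho⟫_ℝ < ⟪α, C.rho⟫_ℝ := by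
        rw [hβ, s_apply'' (C.simple_mem i), inner_sub_left, real_inner_smul_left]
        have : 0 < pairing α (C.π i) :=
          div_pos (by linarith) (root_inner_pos (C.simple_mem i))
        nlinarith [inner_pi_rho_pos i]
      have hss : C.Φ.filter (fun γ => C.IsPos γ ∧ ⟪γ, C.rho⟫_ℝ < ⟪β, C.rho⟫_ℝ) ⊂
          C.Φ.filter (fun γ => C.IsPos γ ∧ ⟪γ, C.rho⟫_ℝ < ⟪α, C.rho⟫_ℝ) := by
        constructor
        · intro γ hγ
          obtain ⟨h1, h2, h3⟩ := Finset.mem_filter.1 hγ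
          exact Finset.mem_filter.2 ⟨h1, h2, lt_trans h3 hlt⟩
        · intro hsub
          have : β ∈ C.Φ.filter (fun γ => C.IsPos γ ∧ ⟪γ, C.rho⟫_ℝ < ⟪β, C.rho⟫_ℝ) :=
            hsub (Finset.mem_filter.2 ⟨hβΦ, hβpos, hlt⟩)
          exact lt_irrefl _ (Finset.mem_filter.1 this).2.2
      have hβcard := Finset.card_lt_card hss
      obtain ⟨l, hl⟩ := ih β hβΦ hβpos (by omega)
      refine ⟨[i] ++ l ++ [i], ?_⟩
      rw [wordProd_append, wordProd_append, wordProd_singleton, hl]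
      have hconj := conj_s (s_mem_W (C.simple_mem i)) hα
      -- hconj : s(πi) * s(α) * (s πi)⁻¹ = s(s(πi) α) = s β
      rw [s_inv (C.simple_mem i)] at hconj
      rw [← hβ] at hconj
      rw [← hconj]
      have h2 := s_mul_self (C.simple_mem i)
      calc C.s (C.π i) * (C.s (C.π i) * C.s α * C.s (C.π i)) * C.s (C.π i)
          = (C.s (C.π i) * C.s (C.π i)) * C.s α * (C.s (C.π i) * C.s (C.π i)) := by group
        _ = C.s α := by rw [h2]; group

lemma s_root_word {α : V} (hα : α ∈ C.Φ) : ∃ l, C.wordProd l = C.s α := by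
  rcases isPos_or_isNeg hα with h | h
  · exact s_root_word_aux _ α hα h le_rfl
  · obtain ⟨l, hl⟩ := s_root_word_aux _ (-α) (neg_root_mem hα) h le_rfl
    exact ⟨l, by rw [hl, s_neg hα]⟩

lemma mem_W_word {g : V ≃ₗ[ℝ] V} (hg : g ∈ C.W) : ∃ l, C.wordProd l = g := by
  rw [C.W_eq] at hg
  refine Subgroup.closure_induction (p := fun g _ => ∃ l, C.wordProd l = g) ?_ ?_ ?_ ?_ hg
  · rintro x ⟨β, hβ, rfl⟩
    exact s_root_word hβ
  · exact ⟨[], rfl⟩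
  · rintro x y _ _ ⟨l₁, h₁⟩ ⟨l₂, h₂⟩
    exact ⟨l₁ ++ l₂, by rw [wordProd_append, h₁, h₂]⟩
  · rintro x _ ⟨l, h⟩
    exact ⟨l.reverse, by rw [wordProd_reverse, h]⟩

-- ====================== length ======================

lemma length_le {g : V ≃ₗ[ℝ] V} {l : List (Fin C.r)} (h : C.wordProd l = g) :
    C.length g ≤ l.length := Nat.sInf_le ⟨l, rfl, h⟩

lemma exists_reduced_word {g : V ≃ₗ[ℝ] V} (hg : g ∈ C.W) :
    ∃ l : List (Fin C.r), l.length = C.length g ∧ C.wordProd l = g := by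
  have hne : {n | ∃ l : List (Fin C.r), l.length = n ∧ C.wordProd l = g}.Nonempty := by
    obtain ⟨l, hl⟩ := mem_W_word hg
    exact ⟨l.length, l, rfl, hl⟩
  exact Nat.sInf_mem hne

lemma length_inv {g : V ≃ₗ[ℝ] V} (hg : g ∈ C.W) : C.length g⁻¹ = C.length g := by
  have key : ∀ h : V ≃ₗ[ℝ] V, h ∈ C.W → C.length h⁻¹ ≤ C.length h := by
    intro h hh
    obtain ⟨l, hlen, hw⟩ := exists_reduced_word hh
    have : C.wordProd l.reverse = h⁻¹ := by rw [wordProd_reverse, hw]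
    calc C.length h⁻¹ ≤ l.reverse.length := length_le this
      _ = C.length h := by rw [List.length_reverse, hlen]
  have h1 := key g hg
  have h2 := key g⁻¹ (inv_mem hg)
  rw [inv_inv] at h2
  omega

-- ====================== the deletion lemma ======================

lemma deletion : ∀ l : List (Fin C.r), ∀ α, α ∈ C.Φ → C.IsPos α →
    C.IsNeg (C.wordProd l α) →
    ∃ (l₁ : List (Fin C.r)) (j : Fin C.r) (l₂ : List (Fin C.r)),
      l = l₁ ++ j :: l₂ ∧ C.wordProd l * C.s α = C.wordProd (l₁ ++ l₂) := by
  intro l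
  induction l with
  | nil =>
    intro α hα hp hn
    exfalso
    rw [wordProd_nil] at hn
    exact not_pos_and_neg hα ⟨hp, hn⟩
  | cons j l ih =>
    intro α hα hp hn
    have hlα : C.wordProd l α ∈ C.Φ := W_maps (wordProd_mem l) hα
    rcases isPos_or_isNeg hlα with hpos | hneg
    · -- the last simple reflection makes it negative, so wordProd l α = π j
      have hwj : C.wordProd (j :: l) α = C.s (C.π j) (C.wordProd l α) := by
        rw [wordProd_cons]; rfl
      rw [hwj] at hn
      have heq : C.wordProd l α = C.π j := reflect_neg_eq_simple hlα hpos hn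
      refine ⟨[], j, l, rfl, ?_⟩
      have hconj := mul_s_eq (wordProd_mem l) hα
      -- wordProd l * s α = s (wordProd l α) * wordProd l = s (π j) * wordProd l
      rw [heq] at hconj
      rw [wordProd_cons, mul_assoc, hconj, ← mul_assoc, s_mul_self (C.simple_mem j)]
      simp [wordProd]
    · obtain ⟨l₁, k, l₂, hsplit, hprod⟩ := ih α hα hp hneg
      refine ⟨j :: l₁, k, l₂, by rw [hsplit]; rfl, ?_⟩
      rw [wordProd_cons, mul_assoc, hprod, ← wordProd_cons]
      rfl

lemma length_mul_s_lt {w : V ≃ₗ[ℝ] V} (hw : w ∈ C.W) {α : V} (hα : α ∈ C.Φ)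
    (hp : C.IsPos α) (hn : C.IsNeg (w α)) : C.length (w * C.s α) < C.length w := by
  obtain ⟨l, hlen, hprod⟩ := exists_reduced_word hw
  have hn' : C.IsNeg (C.wordProd l α) := by rw [hprod]; exact hn
  obtain ⟨l₁, j, l₂, hsplit, hmul⟩ := deletion l α hα hp hn'
  rw [hprod] at hmul
  have h1 : C.length (w * C.s α) ≤ (l₁ ++ l₂).length := length_le hmul.symm
  have h2 : l.length = l₁.length + 1 + l₂.length := by
    rw [hsplit]; simp; omega
  rw [List.length_append] at h1
  omega

lemma length_mul_s_gt {w : V ≃ₗ[ℝ] V} (hw : w ∈ C.W) {α : V} (hα : α ∈ C.Φ)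
    (hp : C.IsPos α) (hn : C.IsPos (w α)) : C.length w < C.length (w * C.s α) := by
  have hww : w * C.s α ∈ C.W := C.W.mul_mem hw (s_mem_W hα)
  have hneg : C.IsNeg ((w * C.s α) α) := by
    have : (w * C.s α) α = w (C.s α α) := rfl
    rw [this, s_apply_self hα, map_neg]
    unfold IsNeg
    rw [neg_neg]
    exact hn
  have := length_mul_s_lt hww hα hp hneg
  have hsimpl : w * C.s α * C.s α = w := by
    rw [mul_assoc, s_mul_self hα, mul_one]
  rw [hsimpl] at this
  exact this

lemma length_s_mul_lt {z : V ≃ₗ[ℝ] V} (hz : z ∈ C.W) {i : Fin C.r}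
    (hn : C.IsNeg (z⁻¹ (C.π i))) : C.length (C.s (C.π i) * z) < C.length z := by
  have h1 : C.length (C.s (C.π i) * z) = C.length (z⁻¹ * C.s (C.π i)) := by
    have : (C.s (C.π i) * z)⁻¹ = z⁻¹ * C.s (C.π i) := by
      rw [mul_inv_rev, s_inv (C.simple_mem i)]
    rw [← this, length_inv (C.W.mul_mem (s_mem_W (C.simple_mem i)) hz)]
  rw [h1, ← length_inv hz]
  exact length_mul_s_lt (inv_mem hz) (C.simple_mem i) (isPos_pi i) hn

-- ====================== finiteness of W and dominant representatives ======================

lemma W_finite : ((C.W : Set (V ≃ₗ[ℝ] V))).Finite := by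
  classical
  have hinj : Function.Injective
      (fun g : ↥(C.W : Set (V ≃ₗ[ℝ] V)) =>
        (fun a : ↥C.Φ => (⟨g.1 a.1, W_maps g.2 a.2⟩ : ↥C.Φ))) := by
    intro g1 g2 h
    apply Subtype.ext
    have heq : ∀ a ∈ (C.Φ : Set V), g1.1 a = g2.1 a := by
      intro a ha
      have := congrFun h ⟨a, ha⟩
      exact congrArg Subtype.val this
    exact LinearEquiv.toLinearMap_injective (LinearMap.ext_on C.root_span heq)
  haveI : Finite ↥(C.W : Set (V ≃ₗ[ℝ] V)) := Finite.of_injective _ hinj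
  exact Set.toFinite _

lemma exists_dominant_rep (lam : V) : ∃ ν, C.IsDominant ν ∧ ∃ z ∈ C.W, z ν = lam := by
  classical
  set O : Set V := (fun g : V ≃ₗ[ℝ] V => g lam) '' (C.W : Set (V ≃ₗ[ℝ] V)) with hO
  have hfin : O.Finite := Set.Finite.image _ W_finite
  have hne : O.Nonempty := ⟨lam, 1, C.W.one_mem, rfl⟩
  obtain ⟨ν, hν, hmax0⟩ := Set.Finite.exists_maximalFor (fun v => ⟪v, C.rho⟫_ℝ) O hfin hne
  have hmax : ∀ a ∈ O, ⟪ν, C.rho⟫_ℝ ≤ ⟪a, C.rho⟫_ℝ → ⟪ν, C.rho⟫_ℝ = ⟪a, C.rho⟫_ℝ :=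
    fun a ha h => le_antisymm h (hmax0 ha h)
  obtain ⟨g, hg, hgν⟩ := hν
  refine ⟨ν, ?_, g⁻¹, inv_mem hg, by rw [← hgν, inv_apply_apply]⟩
  intro i
  by_contra hcon
  push_neg at hcon
  set ν' := C.s (C.π i) ν with hν'
  have hν'O : ν' ∈ O := ⟨C.s (C.π i) * g, C.W.mul_mem (s_mem_W (C.simple_mem i)) hg,
    by rw [hν']; show (C.s (C.π i) * g) lam = C.s (C.π i) ν; rw [← hgν]; rfl⟩
  have hgt : ⟪ν, C.rho⟫_ℝ < ⟪ν', C.rho⟫_ℝ := by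
    rw [hν', s_apply'' (C.simple_mem i), inner_sub_left, real_inner_smul_left]
    nlinarith [inner_pi_rho_pos i]
  have := hmax ν' hν'O (le_of_lt hgt)
  linarith [hgt, this.le]

lemma dominant_inner_pos_root {ν : V} (hdom : C.IsDominant ν) {β : V} (hβ : β ∈ C.Φ)
    (hp : C.IsPos β) : 0 ≤ ⟪ν, β⟫_ℝ := by
  obtain ⟨c, hc, hcs⟩ := hp
  have h1 : ⟪ν, β⟫_ℝ = ∑ m, c m * ⟪ν, C.π m⟫_ℝ := by
    nth_rewrite 1 [hcs]
    rw [inner_sum]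
    exact Finset.sum_congr rfl fun m _ => real_inner_smul_right _ _ _
  rw [h1]
  apply Finset.sum_nonneg
  intro m _
  apply mul_nonneg (hc m)
  have := hdom m
  unfold pairing at this
  have hpos := root_inner_pos (C.simple_mem m)
  by_contra hneg
  push_neg at hneg
  have : 2 * ⟪ν, C.π m⟫_ℝ / ⟪C.π m, C.π m⟫_ℝ < 0 := div_neg_of_neg_of_pos (by linarith) hpos
  linarith [hdom m]

-- ====================== integrality of pairings on X ======================

lemma pairing_int {lam : V} (hlam : lam ∈ C.X) (i : Fin C.r) :
    ∃ n : ℤ, pairing lam (C.π i) = (n : ℝ) := by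
  rw [C.X_eq] at hlam
  refine AddSubgroup.closure_induction (p := fun x _ => ∃ n : ℤ, pairing x (C.π i) = (n : ℝ))
    ?_ ?_ ?_ ?_ hlam
  · rintro x ⟨j, rfl⟩
    refine ⟨if j = i then 1 else 0, ?_⟩
    have := C.fund j i
    unfold pairing
    rw [this]
    split <;> simp
  · exact ⟨0, by simp [pairing]⟩
  · rintro x y _ _ ⟨n, hn⟩ ⟨m, hm⟩
    refine ⟨n + m, ?_⟩
    unfold pairing at *
    rw [inner_add_left]
    push_cast
    rw [← hn, ← hm]
    ring
  · rintro x _ ⟨n, hn⟩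
    refine ⟨-n, ?_⟩
    unfold pairing at *
    rw [inner_neg_left]
    push_cast
    rw [← hn]
    ring

-- ====================== the cone of positive roots ======================

/-- membership in the nonnegative real cone spanned by the positive roots -/
def InCone (x : V) : Prop :=
  ∃ c : V → ℝ, (∀ v, 0 ≤ c v) ∧ x = ∑ α ∈ C.Φ.filter (fun a => C.IsPos a), c α • α

lemma inCone_zero : C.InCone 0 := ⟨0, fun _ => le_rfl, by simp⟩

lemma inCone_add {x y : V} (hx : C.InCone x) (hy : C.InCone y) : C.InCone (x + y) := by
  obtain ⟨c, hc, hcs⟩ := hx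
  obtain ⟨d, hd, hds⟩ := hy
  refine ⟨c + d, fun v => add_nonneg (hc v) (hd v), ?_⟩
  rw [hcs, hds, ← Finset.sum_add_distrib]
  exact Finset.sum_congr rfl fun α _ => by simp [add_smul]

lemma inCone_smul_root {t : ℝ} (ht : 0 ≤ t) {β : V} (hβ : β ∈ C.Φ) (hp : C.IsPos β) :
    C.InCone (t • β) := by
  classical
  refine ⟨fun v => if v = β then t else 0, fun v => by positivity, ?_⟩
  rw [Finset.sum_eq_single_of_mem β (Finset.mem_filter.2 ⟨hβ, hp⟩)]
  · simp
  · intro b _ hb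
    simp [hb]

lemma inCone_coeff_nonneg {t : ℝ} {i : Fin C.r} (h : C.InCone (t • C.π i)) : 0 ≤ t := by
  obtain ⟨c, hc, hcs⟩ := h
  exact smul_pi_cone_nonneg hc hcs

-- ====================== Bruhat chains and the dominance cone ======================

lemma bruhat_step_cone {ν : V} (hdom : C.IsDominant ν) {a b : V ≃ₗ[ℝ] V} (ha : a ∈ C.W)
    (hstep : (∃ α ∈ C.Φ, b = a * C.s α) ∧ C.length a < C.length b) :
    b ∈ C.W ∧ C.InCone (a ν - b ν) := by
  obtain ⟨⟨α, hα, hb⟩, hlen⟩ := hstep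
  obtain ⟨α', hα', hpos', hb'⟩ : ∃ α', α' ∈ C.Φ ∧ C.IsPos α' ∧ b = a * C.s α' := by
    rcases isPos_or_isNeg hα with h | h
    · exact ⟨α, hα, h, hb⟩
    · exact ⟨-α, neg_root_mem hα, h, by rw [hb, s_neg hα]⟩
  have hbW : b ∈ C.W := hb' ▸ C.W.mul_mem ha (s_mem_W hα')
  have haα : a α' ∈ C.Φ := W_maps ha hα'
  have haαpos : C.IsPos (a α') := by
    rcases isPos_or_isNeg haα with h | h
    · exact h
    · exfalso
      have hlt := length_mul_s_lt ha hα' hpos' h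
      rw [← hb'] at hlt
      omega
  refine ⟨hbW, ?_⟩
  have hcompute : a ν - b ν = pairing ν α' • (a α') := by
    rw [hb']
    show a ν - a (C.s α' ν) = _
    rw [s_apply'' hα', map_sub, map_smul]
    abel
  rw [hcompute]
  refine inCone_smul_root ?_ haα haαpos
  unfold pairing
  have h1 := dominant_inner_pos_root hdom hα' hpos'
  have h2 := root_inner_pos hα'
  positivity

lemma bruhat_chain_cone {ν : V} (hdom : C.IsDominant ν) {w z : V ≃ₗ[ℝ] V}
    (hw : w ∈ C.W) (hwz : C.BruhatLE w z) : z ∈ C.W ∧ C.InCone (w ν - z ν) := by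
  induction hwz with
  | refl => exact ⟨hw, by simpa using (inCone_zero (C := C))⟩
  | @tail b c hab hstep ih =>
    obtain ⟨hbW, hcone⟩ := ih
    obtain ⟨hcW, hcone2⟩ := bruhat_step_cone hdom hbW hstep
    refine ⟨hcW, ?_⟩
    have heq : w ν - c ν = (w ν - b ν) + (b ν - c ν) := by abel
    rw [heq]
    exact inCone_add hcone hcone2


end RootSystemData

open RootSystemData


/-- For every `λ ∈ X` and every simple root `α`: `s_α λ ≤ₑ λ` in the
excellent order iff `s_α λ ≥_d λ` in the dominance order, equivalently iff `(λ, α∨) ≤ 0`. -/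
theorem statement_13
    {V : Type} [NormedAddCommGroup V] [InnerProductSpace ℝ V] [FiniteDimensional ℝ V]
    (C : RootSystemData V)
    (lam : V) (hlam : lam ∈ C.X) (i : Fin C.r) :
    (C.ExcLE (C.s (C.π i) lam) lam ↔ C.DomLE lam (C.s (C.π i) lam)) ∧
    (C.ExcLE (C.s (C.π i) lam) lam ↔ pairing lam (C.π i) ≤ 0) := by
  classical
  set p := pairing lam (C.π i) with hp
  have hπi := C.simple_mem i
  have hsiglam : C.s (C.π i) lam = lam - p • C.π i := s_apply'' hπi lam
  have hsiglamsub : C.s (C.π i) lam - lam = (-p) • C.π i := by rw [hsiglam]; module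
  -- DomLE ↔ p ≤ 0
  have hD : C.DomLE lam (C.s (C.π i) lam) ↔ p ≤ 0 := by
    constructor
    · rintro ⟨c, hcs⟩
      rw [hsiglamsub] at hcs
      have h0 : (0:ℝ) ≤ -p :=
        smul_pi_cone_nonneg (c := fun v => ((c v : ℕ) : ℝ)) (fun v => Nat.cast_nonneg _) hcs
      linarith
    · intro hple
      obtain ⟨n, hn⟩ := pairing_int hlam i
      rw [← hp] at hn
      have hn0 : n ≤ 0 := by
        have : (n : ℝ) ≤ 0 := by rw [← hn]; exact hple
        exact_mod_cast this
      refine ⟨fun v => if v = C.π i then (-n).toNat else 0, ?_⟩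
      rw [hsiglamsub]
      rw [Finset.sum_eq_single_of_mem (C.π i) (pi_mem_filter i)]
      · have hval : ((fun v => if v = C.π i then (-n).toNat else 0) (C.π i)) = (-n).toNat := by
          simp
        rw [hval]
        have hcast : (((-n).toNat : ℕ) : ℝ) = -p := by
          have h1 : ((-n).toNat : ℤ) = -n := Int.toNat_of_nonneg (by omega)
          have h2 : (((-n).toNat : ℕ) : ℝ) = ((-n : ℤ) : ℝ) := by exact_mod_cast congrArg (fun m : ℤ => (m : ℝ)) h1
          rw [h2, hn]
          push_cast
          ring
        rw [hcast]
      · intro b _ hb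
        simp [hb]
  -- ExcLE ↔ p ≤ 0
  have hE : C.ExcLE (C.s (C.π i) lam) lam ↔ p ≤ 0 := by
    constructor
    · rintro (hlt | ⟨ν, hνX, hdom, w, hw, z, hz, hwz, hs1, hs2⟩)
      · exfalso
        have := inner_self_inv (s_mem_W hπi) lam
        rw [this] at hlt
        exact lt_irrefl _ hlt
      · obtain ⟨_, hcone⟩ := bruhat_chain_cone hdom hw hwz
        have heq : w ν - z ν = (-p) • C.π i := by
          rw [← hs1, ← hs2, hsiglamsub]
        rw [heq] at hcone
        have := inCone_coeff_nonneg hcone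
        linarith
    · intro hple
      obtain ⟨ν, hdom, z, hz, hzν⟩ := exists_dominant_rep (C := C) lam
      have hνeq : ν = z⁻¹ lam := by rw [← hzν, inv_apply_apply]
      have hνX : ν ∈ C.X := by rw [hνeq]; exact C.X_stable _ (inv_mem hz) _ hlam
      rcases eq_or_lt_of_le hple with hp0 | hplt
      · -- p = 0 : s_i lam = lam, use the reflexive chain
        have hfix : C.s (C.π i) lam = lam := by rw [hsiglam, hp0]; module
        exact Or.inr ⟨ν, hνX, hdom, z, hz, z, hz, Relation.ReflTransGen.refl,
          by rw [hfix, hzν], hzν.symm⟩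
      · -- p < 0
        set β := z⁻¹ (C.π i) with hβ
        have hβΦ : β ∈ C.Φ := W_maps (inv_mem hz) hπi
        have hinnerβ : ⟪ν, β⟫_ℝ < 0 := by
          have h1 : ⟪z ν, C.π i⟫_ℝ = ⟪ν, z⁻¹ (C.π i)⟫_ℝ := inner_inv hz ν (C.π i)
          rw [hzν] at h1
          have h2 : ⟪lam, C.π i⟫_ℝ < 0 := by
            by_contra hcon
            push_neg at hcon
            have := root_inner_pos hπi
            have : 0 ≤ p := by rw [hp]; unfold pairing; positivity
            linarith
          rw [← hβ] at h1
          linarith [h1 ▸ h2]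
        have hβneg : C.IsNeg β := by
          rcases isPos_or_isNeg hβΦ with h | h
          · exact absurd (dominant_inner_pos_root hdom hβΦ h) (by linarith)
          · exact h
        set w := C.s (C.π i) * z with hwdef
        have hwW : w ∈ C.W := C.W.mul_mem (s_mem_W hπi) hz
        have hlen : C.length w < C.length z := length_s_mul_lt hz hβneg
        have hc := conj_s (inv_mem hz) hπi
        rw [inv_inv] at hc
        have hws : w * C.s β = z := by
          rw [hβ, ← hc,
            show (C.s (C.π i) * z) * (z⁻¹ * C.s (C.π i) * z)
              = (C.s (C.π i) * (z * z⁻¹) * C.s (C.π i)) * z from by group,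
            mul_inv_cancel, mul_one, s_mul_self hπi, one_mul]
        have hstep : C.BruhatLE w z :=
          Relation.ReflTransGen.single ⟨⟨β, hβΦ, hws.symm⟩, hlen⟩
        refine Or.inr ⟨ν, hνX, hdom, w, hwW, z, hz, hstep, ?_, hzν.symm⟩
        rw [show w ν = C.s (C.π i) (z ν) from rfl, hzν]
  exact ⟨hE.trans hD.symm, hE⟩
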